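/- arXiv:1604.00561 — 2 statements merged into one kernel-verified Lean document; each statement's English description precedes it below -/
import Mathlib

section
/- Normal mixture representation of the multivariate t distribution: let p ∈ ℕ with p ≥ 1, μ ∈ ℝ^p, Σ ∈ ℝ^{p×p} symmetric positive definite, and ν > 0. If Z is a standard Gaussian random vector on ℝ^p (mean 0, identity covariance), q is a Gamma(ν/2, ν/2)-distributed real random variable, and Z and q are independent, then the law of X = μ + q^{−1/2} Σ^{1/2} Z (where Σ^{1/2} is the positive definite square root of Σ) is absolutely continuous with respect to Lebesgue measure on ℝ^p with density t_p(·; μ, Σ, ν). -/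
open MeasureTheory Matrix
open ProbabilityTheory
open scoped ENNReal NNReal

/-- The multivariate t density with location `μ`, scale matrix `S`, and degrees of
freedom `ν`, on `ι → ℝ` with `p = Fintype.card ι`. -/
noncomputable def mvtPdf {ι : Type*} [Fintype ι] [DecidableEq ι]
    (μ : ι → ℝ) (S : Matrix ι ι ℝ) (ν : ℝ) (x : ι → ℝ) : ℝ :=
  Real.Gamma ((ν + Fintype.card ι) / 2) /
      (Real.Gamma (ν / 2) * (ν * Real.pi) ^ ((Fintype.card ι : ℝ) / 2) * Real.sqrt S.det) *
    (1 + ν⁻¹ * ((x - μ) ⬝ᵥ S⁻¹ *ᵥ (x - μ))) ^ (-(ν + Fintype.card ι) / 2)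

/-- The Gaussian density on `ι → ℝ` with mean `m` and covariance matrix `S`. -/
noncomputable def gaussPdf {ι : Type*} [Fintype ι] [DecidableEq ι]
    (m : ι → ℝ) (S : Matrix ι ι ℝ) (x : ι → ℝ) : ℝ :=
  (2 * Real.pi) ^ (-(Fintype.card ι : ℝ) / 2) * (Real.sqrt S.det)⁻¹ *
    Real.exp (-(1 / 2) * ((x - m) ⬝ᵥ S⁻¹ *ᵥ (x - m)))

/-- The Gamma(a, b) density on `(0, ∞)` (and `0` elsewhere). -/
noncomputable def gammaPdf (a b q : ℝ) : ℝ :=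
  if 0 < q then b ^ a / Real.Gamma a * q ^ (a - 1) * Real.exp (-b * q) else 0



theorem myWithDensity_map_equiv {α β : Type*} [MeasurableSpace α] [MeasurableSpace β]
    (e : MeasurableEquiv α β) (μ : Measure α) (f : α → ℝ≥0∞) :
    (μ.withDensity f).map e = (μ.map e).withDensity (fun y => f (e.symm y)) := by
  ext s hs
  rw [Measure.map_apply e.measurable hs, withDensity_apply _ (e.measurable hs),
    withDensity_apply _ hs, Measure.restrict_map e.measurable hs,
    lintegral_map_equiv (fun y => f (e.symm y)) e]
  simp

variable {p : ℕ}

theorem measurable_mulVec (A : Matrix (Fin p) (Fin p) ℝ) :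
    Measurable fun z : Fin p → ℝ => A *ᵥ z := by
  refine measurable_pi_lambda _ fun i => ?_
  simp only [Matrix.mulVec, dotProduct]
  exact Finset.measurable_sum _ fun j _ => (measurable_pi_apply j).const_mul _

noncomputable def affEq (μ : Fin p → ℝ) (A : Matrix (Fin p) (Fin p) ℝ) (hA : IsUnit A.det)
    (c : ℝ) (hc : c ≠ 0) : MeasurableEquiv (Fin p → ℝ) (Fin p → ℝ) where
  toFun z := μ + c • (A *ᵥ z)
  invFun x := c⁻¹ • (A⁻¹ *ᵥ (x - μ))
  left_inv z := by
    simp [Matrix.mulVec_smul, Matrix.mulVec_mulVec, Matrix.nonsing_inv_mul A hA,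
      smul_smul, inv_mul_cancel₀ hc]
  right_inv x := by
    simp [Matrix.mulVec_smul, Matrix.mulVec_mulVec, Matrix.mul_nonsing_inv A hA,
      smul_smul, mul_inv_cancel₀ hc]
  measurable_toFun := by
    exact measurable_const.add (((measurable_mulVec A)).const_smul c)
  measurable_invFun := by
    exact (((measurable_mulVec A⁻¹).comp (measurable_id.sub_const μ))).const_smul c⁻¹

theorem map_volume_affEq (μ : Fin p → ℝ) (A : Matrix (Fin p) (Fin p) ℝ) (hA : IsUnit A.det)
    (c : ℝ) (hc : c ≠ 0) :
    volume.map (affEq μ A hA c hc) =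
      ENNReal.ofReal |c ^ p * A.det|⁻¹ • (volume : Measure (Fin p → ℝ)) := by
  have h1 : ⇑(affEq μ A hA c hc) = (fun x => μ + x) ∘ ⇑(Matrix.toLin' (c • A)) := by
    funext z
    simp [affEq, Matrix.toLin'_apply, Matrix.smul_mulVec]
  have hdet : (c • A).det ≠ 0 := by
    rw [Matrix.det_smul]
    simp only [Fintype.card_fin]
    exact mul_ne_zero (pow_ne_zero _ hc) hA.ne_zero
  have hm : Measurable fun x : Fin p → ℝ => μ + x := by fun_prop
  rw [h1, ← Measure.map_map hm
      (Matrix.toLin' (c • A)).continuous_of_finiteDimensional.measurable,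
    Real.map_matrix_volume_pi_eq_smul_volume_pi hdet, Measure.map_smul,
    MeasureTheory.map_add_left_eq_self (volume : Measure (Fin p → ℝ)) μ, Matrix.det_smul]
  simp only [Fintype.card_fin, abs_inv]

section Matrix

variable {S : Matrix (Fin p) (Fin p) ℝ} (hS : S.PosDef)

noncomputable def psdSqrt : Matrix (Fin p) (Fin p) ℝ :=
  (hS.posSemidef.isHermitian.eigenvectorUnitary : Matrix (Fin p) (Fin p) ℝ) *
      diagonal (Real.sqrt ∘ hS.posSemidef.isHermitian.eigenvalues) *
      (star hS.posSemidef.isHermitian.eigenvectorUnitary : Matrix (Fin p) (Fin p) ℝ)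

theorem psdSqrt_mul_self : psdSqrt hS * psdSqrt hS = S := by
  have hU : (star hS.posSemidef.isHermitian.eigenvectorUnitary : Matrix (Fin p) (Fin p) ℝ) *
      (hS.posSemidef.isHermitian.eigenvectorUnitary : Matrix (Fin p) (Fin p) ℝ) = 1 :=
    Unitary.coe_star_mul_self _
  have hD : diagonal (Real.sqrt ∘ hS.posSemidef.isHermitian.eigenvalues) *
      diagonal (Real.sqrt ∘ hS.posSemidef.isHermitian.eigenvalues) =
      diagonal (RCLike.ofReal ∘ hS.posSemidef.isHermitian.eigenvalues) := by
    rw [diagonal_mul_diagonal]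
    congr 1
    funext i
    exact Real.mul_self_sqrt (hS.posSemidef.eigenvalues_nonneg i)
  conv_rhs => rw [hS.posSemidef.isHermitian.spectral_theorem, Unitary.conjStarAlgAut_apply]
  unfold psdSqrt
  calc _ = (hS.posSemidef.isHermitian.eigenvectorUnitary : Matrix (Fin p) (Fin p) ℝ) *
        (diagonal (Real.sqrt ∘ hS.posSemidef.isHermitian.eigenvalues) *
          ((star hS.posSemidef.isHermitian.eigenvectorUnitary : Matrix (Fin p) (Fin p) ℝ) *
            (hS.posSemidef.isHermitian.eigenvectorUnitary : Matrix (Fin p) (Fin p) ℝ)) *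
          diagonal (Real.sqrt ∘ hS.posSemidef.isHermitian.eigenvalues)) *
        (star hS.posSemidef.isHermitian.eigenvectorUnitary : Matrix (Fin p) (Fin p) ℝ) := by
        simp only [Matrix.mul_assoc]
    _ = _ := by rw [hU, Matrix.mul_one, hD]

theorem psdSqrt_transpose : (psdSqrt hS)ᵀ = psdSqrt hS := by
  unfold psdSqrt
  simp [Matrix.transpose_mul, Unitary.coe_star, Matrix.star_eq_conjTranspose,
    Matrix.conjTranspose_eq_transpose_of_trivial, Matrix.mul_assoc]

theorem psdSqrt_det_nonneg : 0 ≤ (psdSqrt hS).det := by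
  unfold psdSqrt
  rw [Matrix.det_mul, Matrix.det_mul, mul_comm, ← mul_assoc, ← Matrix.det_mul,
    Unitary.coe_star_mul_self, Matrix.det_one, one_mul, Matrix.det_diagonal]
  exact Finset.prod_nonneg fun i _ => Real.sqrt_nonneg _

theorem sqrt_mul_sqrt : psdSqrt hS * psdSqrt hS = S :=
  psdSqrt_mul_self hS

theorem sqrt_det_nonneg : 0 ≤ (psdSqrt hS).det := by
  exact psdSqrt_det_nonneg hS

theorem sqrt_det_eq : (psdSqrt hS).det = Real.sqrt S.det := by
  have h2 : (psdSqrt hS).det * (psdSqrt hS).det = S.det := by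
    rw [← Matrix.det_mul, sqrt_mul_sqrt hS]
  rw [← h2, Real.sqrt_mul_self (sqrt_det_nonneg hS)]

theorem sqrt_det_pos : 0 < (psdSqrt hS).det := by
  rw [sqrt_det_eq hS]
  exact Real.sqrt_pos.2 hS.det_pos

theorem quad_eq (v : Fin p → ℝ) :
    ((psdSqrt hS)⁻¹ *ᵥ v) ⬝ᵥ ((psdSqrt hS)⁻¹ *ᵥ v) = v ⬝ᵥ S⁻¹ *ᵥ v := by
  set A := psdSqrt hS with hA
  have hsymm : Aᵀ = A := psdSqrt_transpose hS
  have hinvsymm : (A⁻¹)ᵀ = A⁻¹ := by rw [Matrix.transpose_nonsing_inv, hsymm]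
  calc (A⁻¹ *ᵥ v) ⬝ᵥ (A⁻¹ *ᵥ v)
      = ((A⁻¹ *ᵥ v) ᵥ* A⁻¹) ⬝ᵥ v := by rw [Matrix.dotProduct_mulVec]
    _ = (A⁻¹ *ᵥ (A⁻¹ *ᵥ v)) ⬝ᵥ v := by rw [← Matrix.mulVec_transpose, hinvsymm]
    _ = ((A⁻¹ * A⁻¹) *ᵥ v) ⬝ᵥ v := by rw [Matrix.mulVec_mulVec]
    _ = (S⁻¹ *ᵥ v) ⬝ᵥ v := by rw [← Matrix.mul_inv_rev, hA, sqrt_mul_sqrt hS]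
    _ = v ⬝ᵥ S⁻¹ *ᵥ v := dotProduct_comm _ _

theorem quad_nonneg (hS' : S.PosDef) (v : Fin p → ℝ) : 0 ≤ v ⬝ᵥ S⁻¹ *ᵥ v := by
  rw [← quad_eq hS']
  exact Finset.sum_nonneg fun i _ => mul_self_nonneg _

end Matrix

/-! ### The Gaussian density for each value of the mixing variable -/

noncomputable def gf (μ : Fin p → ℝ) (S : Matrix (Fin p) (Fin p) ℝ) (t : ℝ) (x : Fin p → ℝ) : ℝ :=
  (2 * Real.pi) ^ (-(p : ℝ) / 2) * (Real.sqrt t) ^ p * (Real.sqrt S.det)⁻¹ *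
    Real.exp (-(t / 2) * ((x - μ) ⬝ᵥ S⁻¹ *ᵥ (x - μ)))

theorem gaussPdf_one (z : Fin p → ℝ) :
    gaussPdf (0 : Fin p → ℝ) (1 : Matrix (Fin p) (Fin p) ℝ) z =
      (2 * Real.pi) ^ (-(p : ℝ) / 2) * Real.exp (-(1 / 2) * (z ⬝ᵥ z)) := by
  simp [gaussPdf, Matrix.det_one, Matrix.one_mulVec, Fintype.card_fin]

theorem map_gauss (μ : Fin p → ℝ) {S : Matrix (Fin p) (Fin p) ℝ} (hS : S.PosDef)
    {t : ℝ} (ht : 0 < t) :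
    (volume.withDensity fun z => ENNReal.ofReal (gaussPdf (0 : Fin p → ℝ) 1 z)).map
        (fun z : Fin p → ℝ => μ + (Real.sqrt t)⁻¹ • (psdSqrt hS *ᵥ z)) =
      volume.withDensity fun x => ENNReal.ofReal (gf μ S t x) := by
  set A := psdSqrt hS with hAdef
  have hA : IsUnit A.det := (sqrt_det_pos hS).ne'.isUnit
  have hst : 0 < Real.sqrt t := Real.sqrt_pos.2 ht
  have hdetpos : 0 < A.det := sqrt_det_pos hS
  have hc : (Real.sqrt t)⁻¹ ≠ 0 := (inv_pos.2 hst).ne'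
  have hfun : (fun z : Fin p → ℝ => μ + (Real.sqrt t)⁻¹ • (A *ᵥ z)) =
      ⇑(affEq μ A hA (Real.sqrt t)⁻¹ hc) := rfl
  rw [hfun, myWithDensity_map_equiv, map_volume_affEq, withDensity_smul_measure]
  rw [← withDensity_smul' _ _ ENNReal.ofReal_ne_top]
  congr 1
  funext x
  have hsymm : (affEq μ A hA (Real.sqrt t)⁻¹ hc).symm x =
      ((Real.sqrt t)⁻¹)⁻¹ • (A⁻¹ *ᵥ (x - μ)) := rfl
  simp only [Pi.smul_apply, hsymm, smul_eq_mul, inv_inv]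
  have habs : |((Real.sqrt t)⁻¹) ^ p * A.det| = ((Real.sqrt t)⁻¹) ^ p * A.det :=
    abs_of_pos (by positivity)
  rw [habs, ← ENNReal.ofReal_mul (by positivity)]
  congr 1
  have hdot : (Real.sqrt t • (A⁻¹ *ᵥ (x - μ))) ⬝ᵥ (Real.sqrt t • (A⁻¹ *ᵥ (x - μ))) =
      t * ((x - μ) ⬝ᵥ S⁻¹ *ᵥ (x - μ)) := by
    rw [smul_dotProduct, dotProduct_smul, quad_eq hS, smul_eq_mul, smul_eq_mul,
      ← mul_assoc, Real.mul_self_sqrt ht.le]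
  rw [gaussPdf_one, hdot, gf, sqrt_det_eq hS]
  rw [inv_pow, mul_inv, inv_inv]
  ring_nf
open scoped ENNReal NNReal

theorem lintegral_Ioi_gammaPDF {a r : ℝ} (ha : 0 < a) (hr : 0 < r) :
    ∫⁻ t in Set.Ioi (0 : ℝ), gammaPDF a r t = 1 := by
  rw [← lintegral_gammaPDF_eq_one ha hr, ← lintegral_indicator measurableSet_Ioi]
  refine lintegral_congr_ae ?_
  have h0 : ∀ᵐ t : ℝ ∂volume, t ≠ 0 := by
    rw [ae_iff]
    simp
  filter_upwards [h0] with t ht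
  by_cases htpos : 0 < t
  · simp [Set.indicator_of_mem, Set.mem_Ioi, htpos]
  · have hneg : t < 0 := lt_of_le_of_ne (le_of_not_gt htpos) ht
    rw [Set.indicator_of_notMem (by simpa using htpos)]
    rw [gammaPDF_eq, if_neg (not_le.2 hneg)]
    simp

theorem mix_pointwise (p : ℕ) (ν Q D : ℝ) (hν : 0 < ν) (hQ : 0 ≤ Q) (hD : 0 < D)
    {t : ℝ} (ht : 0 < t) :
    ((ν / 2) ^ (ν / 2) / Real.Gamma (ν / 2) * t ^ (ν / 2 - 1) * Real.exp (-(ν / 2) * t)) *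
      ((2 * Real.pi) ^ (-(p : ℝ) / 2) * (Real.sqrt t) ^ p * D⁻¹ * Real.exp (-(t / 2) * Q)) =
    (Real.Gamma ((ν + p) / 2) / (Real.Gamma (ν / 2) * (ν * Real.pi) ^ ((p : ℝ) / 2) * D) *
        (1 + ν⁻¹ * Q) ^ (-((ν + p) / 2))) *
      gammaPDFReal ((ν + p) / 2) ((ν + Q) / 2) t := by
  have hπ := Real.pi_pos
  have hG2 : 0 < Real.Gamma (ν / 2) := Real.Gamma_pos_of_pos (by linarith)
  have hGa : 0 < Real.Gamma ((ν + p) / 2) := Real.Gamma_pos_of_pos (by positivity)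
  have hνQ : 0 < ν + Q := by linarith
  have hw : 0 < (ν * Real.pi) ^ ((p : ℝ) / 2) := Real.rpow_pos_of_pos (by positivity) _
  have hsq : (Real.sqrt t) ^ p = t ^ ((p : ℝ) / 2) := by
    rw [Real.sqrt_eq_rpow, ← Real.rpow_natCast (t ^ (1 / 2 : ℝ)) p, ← Real.rpow_mul ht.le]
    congr 1; ring
  have htpow : t ^ (ν / 2 - 1) * t ^ ((p : ℝ) / 2) = t ^ ((ν + p) / 2 - 1) := by
    rw [← Real.rpow_add ht]; congr 1; ring
  have hexp : Real.exp (-(ν / 2) * t) * Real.exp (-(t / 2) * Q) =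
      Real.exp (-((ν + Q) / 2 * t)) := by
    rw [← Real.exp_add]; congr 1; ring
  have hbase : (1 : ℝ) + ν⁻¹ * Q = (ν + Q) / ν := by field_simp
  have hXb : ((ν + Q) / ν) ^ (-((ν + (p : ℝ)) / 2)) * ((ν + Q) / 2) ^ ((ν + (p : ℝ)) / 2) =
      (ν / 2) ^ ((ν + (p : ℝ)) / 2) := by
    rw [Real.rpow_neg (by positivity), ← Real.inv_rpow (by positivity), inv_div,
      ← Real.mul_rpow (by positivity) (by positivity)]
    congr 1
    field_simp
  have hsplit : (ν / 2 : ℝ) ^ ((ν + (p : ℝ)) / 2) = (ν / 2) ^ (ν / 2) * (ν / 2) ^ ((p : ℝ) / 2) := by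
    rw [← Real.rpow_add (by positivity)]; congr 1; ring
  have hhalf : (ν / 2 : ℝ) ^ ((p : ℝ) / 2) =
      (ν * Real.pi) ^ ((p : ℝ) / 2) * (2 * Real.pi) ^ (-(p : ℝ) / 2) := by
    have h1 : (ν / 2 : ℝ) = (ν * Real.pi) / (2 * Real.pi) := by
      field_simp
    rw [h1, Real.div_rpow (by positivity) (by positivity), neg_div,
      Real.rpow_neg (by positivity), div_eq_mul_inv]
  unfold gammaPDFReal
  rw [if_pos ht.le, hsq]
  have hL : ((ν / 2) ^ (ν / 2) / Real.Gamma (ν / 2) * t ^ (ν / 2 - 1) * Real.exp (-(ν / 2) * t)) *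
      ((2 * Real.pi) ^ (-(p : ℝ) / 2) * t ^ ((p : ℝ) / 2) * D⁻¹ * Real.exp (-(t / 2) * Q)) =
      ((ν / 2) ^ (ν / 2) * (2 * Real.pi) ^ (-(p : ℝ) / 2) / (Real.Gamma (ν / 2) * D)) *
        ((t ^ (ν / 2 - 1) * t ^ ((p : ℝ) / 2)) *
          (Real.exp (-(ν / 2) * t) * Real.exp (-(t / 2) * Q))) := by ring
  rw [hL, htpow, hexp, hbase]
  have hR : (Real.Gamma ((ν + (p : ℝ)) / 2) / (Real.Gamma (ν / 2) * (ν * Real.pi) ^ ((p : ℝ) / 2) * D) *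
        ((ν + Q) / ν) ^ (-((ν + (p : ℝ)) / 2))) *
      (((ν + Q) / 2) ^ ((ν + (p : ℝ)) / 2) / Real.Gamma ((ν + (p : ℝ)) / 2) *
        t ^ ((ν + (p : ℝ)) / 2 - 1) * Real.exp (-((ν + Q) / 2 * t))) =
      ((((ν + Q) / ν) ^ (-((ν + (p : ℝ)) / 2)) * ((ν + Q) / 2) ^ ((ν + (p : ℝ)) / 2)) *
          (Real.Gamma ((ν + (p : ℝ)) / 2) / Real.Gamma ((ν + (p : ℝ)) / 2)) /
          (Real.Gamma (ν / 2) * (ν * Real.pi) ^ ((p : ℝ) / 2) * D)) *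
        (t ^ ((ν + (p : ℝ)) / 2 - 1) * Real.exp (-((ν + Q) / 2 * t))) := by ring
  rw [hR, hXb, div_self hGa.ne', mul_one, hsplit, hhalf]
  field_simp

theorem gammaPdf_nonneg {a b t : ℝ} (ha : 0 < a) (hb : 0 < b) : 0 ≤ gammaPdf a b t := by
  unfold gammaPdf
  split_ifs with h
  · have hG : 0 < Real.Gamma a := Real.Gamma_pos_of_pos ha
    positivity
  · exact le_refl _

theorem mix_integral {p : ℕ} (μ : Fin p → ℝ) {S : Matrix (Fin p) (Fin p) ℝ} (hS : S.PosDef)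
    {ν : ℝ} (hν : 0 < ν) (x : Fin p → ℝ) :
    ∫⁻ t in Set.Ioi (0 : ℝ),
        ENNReal.ofReal (gammaPdf (ν / 2) (ν / 2) t) * ENNReal.ofReal (gf μ S t x)
      = ENNReal.ofReal (mvtPdf μ S ν x) := by
  set Q := (x - μ) ⬝ᵥ S⁻¹ *ᵥ (x - μ) with hQdef
  have hQ : 0 ≤ Q := quad_nonneg hS _
  have hD : 0 < Real.sqrt S.det := Real.sqrt_pos.2 hS.det_pos
  have hG2 : 0 < Real.Gamma (ν / 2) := Real.Gamma_pos_of_pos (by positivity)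
  have hGa : 0 < Real.Gamma ((ν + p) / 2) := Real.Gamma_pos_of_pos (by positivity)
  have hK : mvtPdf μ S ν x = Real.Gamma ((ν + p) / 2) /
      (Real.Gamma (ν / 2) * (ν * Real.pi) ^ ((p : ℝ) / 2) * Real.sqrt S.det) *
      (1 + ν⁻¹ * Q) ^ (-((ν + p) / 2)) := by
    simp only [mvtPdf, Fintype.card_fin]
    rw [neg_div]
  have hw : 0 < (ν * Real.pi) ^ ((p : ℝ) / 2) := Real.rpow_pos_of_pos (by positivity) _
  have hKnn : 0 ≤ mvtPdf μ S ν x := by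
    rw [hK]; positivity
  have step : ∀ t ∈ Set.Ioi (0 : ℝ),
      ENNReal.ofReal (gammaPdf (ν / 2) (ν / 2) t) * ENNReal.ofReal (gf μ S t x)
        = ENNReal.ofReal (mvtPdf μ S ν x) * gammaPDF ((ν + p) / 2) ((ν + Q) / 2) t := by
    intro t ht
    rw [Set.mem_Ioi] at ht
    rw [← ENNReal.ofReal_mul (gammaPdf_nonneg (by positivity) (by positivity)),
      gammaPDF, ← ENNReal.ofReal_mul hKnn]
    congr 1
    have hmp := mix_pointwise p ν Q (Real.sqrt S.det) hν hQ hD ht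
    simp only [gammaPdf, gf, if_pos ht, hK, ← hQdef]
    exact hmp
  rw [setLIntegral_congr_fun measurableSet_Ioi step,
    lintegral_const_mul' _ _ ENNReal.ofReal_ne_top,
    lintegral_Ioi_gammaPDF (by positivity) (by positivity), mul_one]

theorem measurable_gammaPdfE (a b : ℝ) : Measurable fun t => ENNReal.ofReal (gammaPdf a b t) := by
  apply Measurable.ennreal_ofReal
  unfold gammaPdf
  exact Measurable.ite (measurableSet_lt measurable_const measurable_id) (by fun_prop) (by fun_prop)

theorem measurable_quad {p : ℕ} (μ : Fin p → ℝ) (S : Matrix (Fin p) (Fin p) ℝ) :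
    Measurable fun x : Fin p → ℝ => (x - μ) ⬝ᵥ S⁻¹ *ᵥ (x - μ) := by
  have h1 : Measurable fun x : Fin p → ℝ => x - μ := measurable_id.sub_const μ
  simp only [dotProduct]
  refine Finset.measurable_sum _ fun i _ => ?_
  exact ((measurable_pi_apply i).comp h1).mul
    ((measurable_pi_apply i).comp ((measurable_mulVec S⁻¹).comp h1))

theorem measurable_gfE {p : ℕ} (μ : Fin p → ℝ) (S : Matrix (Fin p) (Fin p) ℝ) :
    Measurable fun tx : ℝ × (Fin p → ℝ) => ENNReal.ofReal (gf μ S tx.1 tx.2) := by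
  apply Measurable.ennreal_ofReal
  unfold gf
  refine Measurable.mul (Measurable.mul (Measurable.mul measurable_const ?_) measurable_const) ?_
  · exact (Real.continuous_sqrt.measurable.comp measurable_fst).pow_const p
  · exact (((measurable_fst.div_const 2).neg.mul
      ((measurable_quad μ S).comp measurable_snd))).exp

/-- Normal mixture representation: if `Z` is standard Gaussian on `ℝ^p`, `q ~ Gamma(ν/2, ν/2)`
independent of `Z`, then `X = μ + q^{-1/2} Σ^{1/2} Z` has density `t_p(·; μ, Σ, ν)` with respect
to Lebesgue measure. -/
theorem mvt_normal_mixture_representation (p : ℕ) (hp : 1 ≤ p) (μ : Fin p → ℝ)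
    (S : Matrix (Fin p) (Fin p) ℝ) (hS : S.PosDef) (ν : ℝ) (hν : 0 < ν)
    {Ω : Type*} [MeasurableSpace Ω] (P : Measure Ω) [IsProbabilityMeasure P]
    (Z : Ω → Fin p → ℝ) (q : Ω → ℝ) (hZm : Measurable Z) (hqm : Measurable q)
    (hZ : Measure.map Z P
        = volume.withDensity fun z => ENNReal.ofReal (gaussPdf (0 : Fin p → ℝ) (1 : Matrix (Fin p) (Fin p) ℝ) z))
    (hq : Measure.map q P = volume.withDensity fun t => ENNReal.ofReal (gammaPdf (ν / 2) (ν / 2) t))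
    (hind : ProbabilityTheory.IndepFun Z q P) :
    Measure.map (fun ω => μ + (Real.sqrt (q ω))⁻¹ • (((hS.posSemidef.isHermitian.eigenvectorUnitary : Matrix (Fin p) (Fin p) ℝ) *
      diagonal (Real.sqrt ∘ hS.posSemidef.isHermitian.eigenvalues) *
      (star hS.posSemidef.isHermitian.eigenvectorUnitary : Matrix (Fin p) (Fin p) ℝ)) *ᵥ Z ω)) P
      = volume.withDensity fun x => ENNReal.ofReal (mvtPdf μ S ν x) := by
  show Measure.map (fun ω => μ + (Real.sqrt (q ω))⁻¹ • (psdSqrt hS *ᵥ Z ω)) P = _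
  set A := psdSqrt hS with hAdef
  set Mz := volume.withDensity fun z : Fin p → ℝ =>
    ENNReal.ofReal (gaussPdf (0 : Fin p → ℝ) 1 z) with hMz
  set Mq := volume.withDensity fun t : ℝ =>
    ENNReal.ofReal (gammaPdf (ν / 2) (ν / 2) t) with hMq
  haveI hPz : IsProbabilityMeasure Mz := hZ ▸ Measure.isProbabilityMeasure_map hZm.aemeasurable
  haveI hPq : IsProbabilityMeasure Mq := hq ▸ Measure.isProbabilityMeasure_map hqm.aemeasurable
  set g : (Fin p → ℝ) × ℝ → (Fin p → ℝ) :=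
    fun zt => μ + (Real.sqrt zt.2)⁻¹ • (A *ᵥ zt.1) with hgdef
  have hgm : Measurable g := by
    apply measurable_const.add
    exact ((Real.continuous_sqrt.measurable.comp measurable_snd).inv).smul
      ((measurable_mulVec A).comp measurable_fst)
  have hXg : (fun ω => μ + (Real.sqrt (q ω))⁻¹ • (A *ᵥ Z ω)) = g ∘ fun ω => (Z ω, q ω) := rfl
  rw [hXg, ← Measure.map_map hgm (hZm.prodMk hqm),
    (ProbabilityTheory.indepFun_iff_map_prod_eq_prod_map_map hZm.aemeasurable
      hqm.aemeasurable).1 hind, hZ, hq]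
  ext s hs
  rw [Measure.map_apply hgm hs, Measure.prod_apply_symm (hgm hs), withDensity_apply _ hs]
  have hF : Measurable fun t : ℝ => Mz ((fun z => (z, t)) ⁻¹' (g ⁻¹' s)) :=
    measurable_measure_prodMk_right (hgm hs)
  rw [hMq, lintegral_withDensity_eq_lintegral_mul volume (measurable_gammaPdfE _ _) hF]
  have hindic : (fun t : ℝ => (ENNReal.ofReal (gammaPdf (ν / 2) (ν / 2) t) *
        Mz ((fun z => (z, t)) ⁻¹' (g ⁻¹' s)))) =
      Set.indicator (Set.Ioi 0) (fun t : ℝ => (ENNReal.ofReal (gammaPdf (ν / 2) (ν / 2) t) *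
        Mz ((fun z => (z, t)) ⁻¹' (g ⁻¹' s)))) := by
    funext t
    by_cases ht : (0 : ℝ) < t
    · rw [Set.indicator_of_mem (Set.mem_Ioi.2 ht)]
    · rw [Set.indicator_of_notMem (by simpa using ht)]
      unfold gammaPdf
      rw [if_neg ht]
      simp
  simp only [Pi.mul_apply]
  rw [hindic, lintegral_indicator measurableSet_Ioi]
  have step : ∀ t ∈ Set.Ioi (0 : ℝ),
      ENNReal.ofReal (gammaPdf (ν / 2) (ν / 2) t) * Mz ((fun z => (z, t)) ⁻¹' (g ⁻¹' s))
        = ∫⁻ x in s, ENNReal.ofReal (gammaPdf (ν / 2) (ν / 2) t) *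
            ENNReal.ofReal (gf μ S t x) ∂volume := by
    intro t ht
    rw [Set.mem_Ioi] at ht
    have hφ : Measurable fun z : Fin p → ℝ => μ + (Real.sqrt t)⁻¹ • (A *ᵥ z) := by
      exact measurable_const.add ((measurable_mulVec A).const_smul (Real.sqrt t)⁻¹)
    have hslice : (fun z => (z, t)) ⁻¹' (g ⁻¹' s) =
        (fun z : Fin p → ℝ => μ + (Real.sqrt t)⁻¹ • (A *ᵥ z)) ⁻¹' s := rfl
    rw [hslice, ← Measure.map_apply hφ hs, hMz, map_gauss μ hS ht, withDensity_apply _ hs,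
      lintegral_const_mul' _ _ ENNReal.ofReal_ne_top]
  rw [setLIntegral_congr_fun measurableSet_Ioi step]
  have hswap : ∫⁻ t in Set.Ioi (0 : ℝ), ∫⁻ x in s,
        ENNReal.ofReal (gammaPdf (ν / 2) (ν / 2) t) * ENNReal.ofReal (gf μ S t x) ∂volume ∂volume
      = ∫⁻ x in s, ∫⁻ t in Set.Ioi (0 : ℝ),
        ENNReal.ofReal (gammaPdf (ν / 2) (ν / 2) t) * ENNReal.ofReal (gf μ S t x) ∂volume ∂volume := by
    apply lintegral_lintegral_swap
    exact (((measurable_gammaPdfE _ _).comp measurable_fst).mul (measurable_gfE μ S)).aemeasurable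
  rw [hswap]
  exact setLIntegral_congr_fun hs (fun x _ => mix_integral μ hS hν x)
end

section
/- Conclusion One (conditional distribution of the multivariate t is multivariate t, density form): let p1, p2 ∈ ℕ with p1, p2 ≥ 1, μ = (μ1, μ2) ∈ ℝ^{p1} × ℝ^{p2}, Σ a symmetric positive definite matrix on ℝ^{p1+p2} with blocks Σ11, Σ12, Σ21, Σ22, and ν > 0. Then for every x1 ∈ ℝ^{p1} and x2 ∈ ℝ^{p2}, t_{p1+p2}((x1, x2); μ, Σ, ν) / t_{p1}(x1; μ1, Σ11, ν) = t_{p2}(x2; μ_{2|1}(x1), ((ν + d1(x1))/(ν + p1)) Σ_{22|1}, ν + p1), where the matrix ((ν + d1(x1))/(ν + p1)) Σ_{22|1} is symmetric positive definite. -/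
open MeasureTheory Matrix

section Aux
variable {m n : Type*} [Fintype m] [Fintype n] [DecidableEq m] [DecidableEq n]

lemma posDef_smul' {M : Matrix n n ℝ} (hM : M.PosDef) {c : ℝ} (hc : 0 < c) :
    (c • M).PosDef := by
  refine PosDef.of_dotProduct_mulVec_pos ?_ (fun x hx => ?_)
  · have h := hM.1.eq
    unfold Matrix.IsHermitian
    rw [conjTranspose_smul, h]
    simp
  · simpa [smul_mulVec, dotProduct_smul] using mul_pos hc (hM.dotProduct_mulVec_pos hx)

lemma posDef11 {A : Matrix m m ℝ} {B : Matrix m n ℝ} {C : Matrix n m ℝ} {D : Matrix n n ℝ}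
    (hS : (fromBlocks A B C D).PosDef) : A.PosDef := by
  refine PosDef.of_dotProduct_mulVec_pos (isHermitian_fromBlocks_iff.mp hS.1).1 (fun x hx => ?_)
  have hz : (Sum.elim x 0 : m ⊕ n → ℝ) ≠ 0 := by
    intro h; apply hx; funext i; exact congrFun h (Sum.inl i)
  have := hS.dotProduct_mulVec_pos hz
  simpa [fromBlocks_mulVec, sumElim_dotProduct_sumElim, Function.star_sumElim] using this

lemma posDefSchur {A : Matrix m m ℝ} {B : Matrix m n ℝ} {D : Matrix n n ℝ}
    (hS : (fromBlocks A B Bᴴ D).PosDef) : (D - Bᴴ * A⁻¹ * B).PosDef := by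
  have hA : A.PosDef := posDef11 hS
  haveI : Invertible A := hA.isUnit.invertible
  refine PosDef.of_dotProduct_mulVec_pos ((IsHermitian.fromBlocks₁₁ B D hA.1).mp hS.1) (fun y hy => ?_)
  have hz : (Sum.elim (-((A⁻¹ * B) *ᵥ y)) y : m ⊕ n → ℝ) ≠ 0 := by
    intro h; apply hy; funext i; exact congrFun h (Sum.inr i)
  have key := schur_complement_eq₁₁ B D (-((A⁻¹ * B) *ᵥ y)) y hA.1
  have hpos := hS.dotProduct_mulVec_pos hz
  rw [dotProduct_mulVec, key] at hpos
  simpa [dotProduct_mulVec] using hpos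

lemma quad_decomp {A : Matrix m m ℝ} (B : Matrix m n ℝ) {D : Matrix n n ℝ}
    (hS : (fromBlocks A B Bᴴ D).PosDef) (u : m → ℝ) (v : n → ℝ) :
    Sum.elim u v ⬝ᵥ (fromBlocks A B Bᴴ D)⁻¹ *ᵥ Sum.elim u v
      = u ⬝ᵥ A⁻¹ *ᵥ u +
        (v - Bᴴ *ᵥ (A⁻¹ *ᵥ u)) ⬝ᵥ (D - Bᴴ * A⁻¹ * B)⁻¹ *ᵥ (v - Bᴴ *ᵥ (A⁻¹ *ᵥ u)) := by
  have hA : A.PosDef := posDef11 hS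
  have hW : (D - Bᴴ * A⁻¹ * B).PosDef := posDefSchur hS
  haveI iA : Invertible A := hA.isUnit.invertible
  haveI iW : Invertible (D - Bᴴ * A⁻¹ * B) := hW.isUnit.invertible
  haveI iS : Invertible (fromBlocks A B Bᴴ D) := hS.isUnit.invertible
  have hiA : ⅟A = A⁻¹ := invOf_eq_nonsing_inv A
  haveI iW' : Invertible (D - Bᴴ * ⅟A * B) := by rw [hiA]; exact iW
  have hiW : ⅟(D - Bᴴ * ⅟A * B) = (D - Bᴴ * A⁻¹ * B)⁻¹ := by
    rw [invOf_eq_nonsing_inv, hiA]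
  set W : Matrix n n ℝ := D - Bᴴ * A⁻¹ * B with hWdef
  have hinv : (fromBlocks A B Bᴴ D)⁻¹ =
      fromBlocks (A⁻¹ + A⁻¹ * B * W⁻¹ * Bᴴ * A⁻¹) (-(A⁻¹ * B * W⁻¹))
        (-(W⁻¹ * Bᴴ * A⁻¹)) W⁻¹ := by
    rw [← invOf_eq_nonsing_inv (fromBlocks A B Bᴴ D), invOf_fromBlocks₁₁_eq, hiW, hiA]
  rw [hinv]
  have hAs : (A⁻¹)ᵀ = A⁻¹ := by
    have := hA.1.inv.eq
    rwa [conjTranspose_eq_transpose_of_trivial] at this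
  have hWs : (W⁻¹)ᵀ = W⁻¹ := by
    have := hW.1.inv.eq
    rwa [conjTranspose_eq_transpose_of_trivial] at this
  have key : ∀ y : n → ℝ, u ⬝ᵥ (A⁻¹ * B) *ᵥ y = (Bᴴ *ᵥ A⁻¹ *ᵥ u) ⬝ᵥ y := by
    intro y
    have hT : (A⁻¹ * B) = (Bᴴ * A⁻¹)ᵀ := by
      rw [transpose_mul, hAs, conjTranspose_eq_transpose_of_trivial, transpose_transpose]
    rw [hT, dotProduct_mulVec, vecMul_transpose, mulVec_mulVec]
  have e2 : u ⬝ᵥ (A⁻¹ * B * W⁻¹) *ᵥ v = (Bᴴ *ᵥ A⁻¹ *ᵥ u) ⬝ᵥ W⁻¹ *ᵥ v := by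
    rw [← mulVec_mulVec, key]
  have e1 : u ⬝ᵥ (A⁻¹ * B * W⁻¹ * Bᴴ * A⁻¹) *ᵥ u
      = (Bᴴ *ᵥ A⁻¹ *ᵥ u) ⬝ᵥ W⁻¹ *ᵥ (Bᴴ *ᵥ A⁻¹ *ᵥ u) := by
    have h : A⁻¹ * B * W⁻¹ * Bᴴ * A⁻¹ = (A⁻¹ * B) * (W⁻¹ * (Bᴴ * A⁻¹)) := by
      simp only [Matrix.mul_assoc]
    rw [h, ← mulVec_mulVec, key]
    simp only [← mulVec_mulVec]
  have e3 : v ⬝ᵥ (W⁻¹ * Bᴴ * A⁻¹) *ᵥ u = v ⬝ᵥ W⁻¹ *ᵥ (Bᴴ *ᵥ A⁻¹ *ᵥ u) := by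
    simp only [← mulVec_mulVec]
  have e4 : v ⬝ᵥ W⁻¹ *ᵥ (Bᴴ *ᵥ A⁻¹ *ᵥ u) = (Bᴴ *ᵥ A⁻¹ *ᵥ u) ⬝ᵥ W⁻¹ *ᵥ v := by
    nth_rewrite 1 [← hWs]
    rw [dotProduct_mulVec, vecMul_transpose, dotProduct_comm]
  simp only [fromBlocks_mulVec, sumElim_dotProduct_sumElim, add_mulVec, neg_mulVec,
    dotProduct_add, dotProduct_neg, dotProduct_sub, mulVec_sub, sub_dotProduct,
    Sum.elim_comp_inl, Sum.elim_comp_inr]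
  rw [e1, e2, e3, e4]
  ring

lemma scalar_step (ν d1 q2 g11 gW : ℝ) (n1 n2 : ℕ) (hn1 : 1 ≤ n1) (hn2 : 1 ≤ n2)
    (hν : 0 < ν) (hd1 : 0 ≤ d1) (hq2 : 0 ≤ q2) (h11 : 0 < g11) (hgW : 0 < gW) :
    Real.Gamma ((ν + (↑n1 + ↑n2)) / 2) /
        (Real.Gamma (ν / 2) * (ν * Real.pi) ^ (((n1:ℝ) + (n2:ℝ)) / 2) *
          Real.sqrt (g11 * gW)) *
      (1 + ν⁻¹ * (d1 + q2)) ^ (-(ν + ((n1:ℝ) + (n2:ℝ))) / 2) /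
      (Real.Gamma ((ν + (n1:ℝ)) / 2) /
        (Real.Gamma (ν / 2) * (ν * Real.pi) ^ ((n1:ℝ) / 2) * Real.sqrt g11) *
      (1 + ν⁻¹ * d1) ^ (-(ν + (n1:ℝ)) / 2))
    = Real.Gamma ((ν + (n1:ℝ) + (n2:ℝ)) / 2) /
        (Real.Gamma ((ν + (n1:ℝ)) / 2) * ((ν + (n1:ℝ)) * Real.pi) ^ ((n2:ℝ) / 2) *
          Real.sqrt (((ν + d1) / (ν + (n1:ℝ))) ^ n2 * gW)) *
      (1 + (ν + (n1:ℝ))⁻¹ * (((ν + d1) / (ν + (n1:ℝ)))⁻¹ * q2)) ^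
        (-(ν + (n1:ℝ) + (n2:ℝ)) / 2) := by
  have hπ := Real.pi_pos
  have hP1 : (0:ℝ) < n1 := by exact_mod_cast hn1
  have hP2 : (0:ℝ) < n2 := by exact_mod_cast hn2
  have hN1 : 0 < ν + d1 := by linarith
  have hN2 : 0 < ν + d1 + q2 := by linarith
  have hνP : 0 < ν + (n1:ℝ) := by linarith
  have hG0 : 0 < Real.Gamma (ν / 2) := Real.Gamma_pos_of_pos (by linarith)
  have hGB : 0 < Real.Gamma ((ν + (n1:ℝ)) / 2) := Real.Gamma_pos_of_pos (by linarith)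
  have hGA : 0 < Real.Gamma ((ν + (n1:ℝ) + (n2:ℝ)) / 2) := Real.Gamma_pos_of_pos (by linarith)
  have hassoc : ν + ((n1:ℝ) + (n2:ℝ)) = ν + (n1:ℝ) + (n2:ℝ) := by ring
  rw [hassoc]
  have hb2 : 1 + ν⁻¹ * (d1 + q2) = (ν + d1 + q2) / ν := by field_simp; ring
  have hb1 : 1 + ν⁻¹ * d1 = (ν + d1) / ν := by field_simp
  have hb3 : 1 + (ν + (n1:ℝ))⁻¹ * (((ν + d1) / (ν + (n1:ℝ)))⁻¹ * q2)
      = (ν + d1 + q2) / (ν + d1) := by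
    rw [inv_div]
    field_simp
  rw [hb1, hb2, hb3]
  have hνπ : 0 < ν * Real.pi := mul_pos hν hπ
  have hνPπ : 0 < (ν + (n1:ℝ)) * Real.pi := mul_pos hνP hπ
  have hgg : 0 < g11 * gW := mul_pos h11 hgW
  have hcpos : 0 < (ν + d1) / (ν + (n1:ℝ)) := div_pos hN1 hνP
  have hcw : 0 < ((ν + d1) / (ν + (n1:ℝ))) ^ n2 * gW := mul_pos (pow_pos hcpos n2) hgW
  have hr1 : 0 < (ν + d1 + q2) / ν := div_pos hN2 hν
  have hr2 : 0 < (ν + d1) / ν := div_pos hN1 hν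
  have hr3 : 0 < (ν + d1 + q2) / (ν + d1) := div_pos hN2 hN1
  have hLpos : 0 < Real.Gamma ((ν + (n1:ℝ) + (n2:ℝ)) / 2) /
        (Real.Gamma (ν / 2) * (ν * Real.pi) ^ (((n1:ℝ) + (n2:ℝ)) / 2) *
          Real.sqrt (g11 * gW)) *
      ((ν + d1 + q2) / ν) ^ (-(ν + (n1:ℝ) + (n2:ℝ)) / 2) /
      (Real.Gamma ((ν + (n1:ℝ)) / 2) /
        (Real.Gamma (ν / 2) * (ν * Real.pi) ^ ((n1:ℝ) / 2) * Real.sqrt g11) *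
      ((ν + d1) / ν) ^ (-(ν + (n1:ℝ)) / 2)) := by
    apply div_pos
    · exact mul_pos (div_pos hGA (mul_pos (mul_pos hG0 (Real.rpow_pos_of_pos hνπ _))
        (Real.sqrt_pos.mpr hgg))) (Real.rpow_pos_of_pos hr1 _)
    · exact mul_pos (div_pos hGB (mul_pos (mul_pos hG0 (Real.rpow_pos_of_pos hνπ _))
        (Real.sqrt_pos.mpr h11))) (Real.rpow_pos_of_pos hr2 _)
  have hRpos : 0 < Real.Gamma ((ν + (n1:ℝ) + (n2:ℝ)) / 2) /
        (Real.Gamma ((ν + (n1:ℝ)) / 2) * ((ν + (n1:ℝ)) * Real.pi) ^ ((n2:ℝ) / 2) *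
          Real.sqrt (((ν + d1) / (ν + (n1:ℝ))) ^ n2 * gW)) *
      ((ν + d1 + q2) / (ν + d1)) ^ (-(ν + (n1:ℝ) + (n2:ℝ)) / 2) := by
    exact mul_pos (div_pos hGA (mul_pos (mul_pos hGB (Real.rpow_pos_of_pos hνPπ _))
      (Real.sqrt_pos.mpr hcw))) (Real.rpow_pos_of_pos hr3 _)
  refine Real.log_injOn_pos (Set.mem_Ioi.mpr hLpos) (Set.mem_Ioi.mpr hRpos) ?_
  rw [Real.log_div (ne_of_gt (by
      exact mul_pos (div_pos hGA (mul_pos (mul_pos hG0 (Real.rpow_pos_of_pos hνπ _))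
        (Real.sqrt_pos.mpr hgg))) (Real.rpow_pos_of_pos hr1 _)))
    (ne_of_gt (by
      exact mul_pos (div_pos hGB (mul_pos (mul_pos hG0 (Real.rpow_pos_of_pos hνπ _))
        (Real.sqrt_pos.mpr h11))) (Real.rpow_pos_of_pos hr2 _)))]
  have hR1 : 0 < (ν * Real.pi) ^ (((n1:ℝ) + (n2:ℝ)) / 2) := Real.rpow_pos_of_pos hνπ _
  have hR2 : 0 < (ν * Real.pi) ^ ((n1:ℝ) / 2) := Real.rpow_pos_of_pos hνπ _
  have hR3 : 0 < ((ν + (n1:ℝ)) * Real.pi) ^ ((n2:ℝ) / 2) := Real.rpow_pos_of_pos hνPπ _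
  have hS1 : 0 < Real.sqrt (g11 * gW) := Real.sqrt_pos.mpr hgg
  have hS2 : 0 < Real.sqrt g11 := Real.sqrt_pos.mpr h11
  have hS3 : 0 < Real.sqrt (((ν + d1) / (ν + (n1:ℝ))) ^ n2 * gW) := Real.sqrt_pos.mpr hcw
  have hC1 : 0 < Real.Gamma (ν / 2) * (ν * Real.pi) ^ (((n1:ℝ) + (n2:ℝ)) / 2) *
      Real.sqrt (g11 * gW) := mul_pos (mul_pos hG0 hR1) hS1
  have hC2 : 0 < Real.Gamma (ν / 2) * (ν * Real.pi) ^ ((n1:ℝ) / 2) * Real.sqrt g11 :=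
    mul_pos (mul_pos hG0 hR2) hS2
  have hC3 : 0 < Real.Gamma ((ν + (n1:ℝ)) / 2) * ((ν + (n1:ℝ)) * Real.pi) ^ ((n2:ℝ) / 2) *
      Real.sqrt (((ν + d1) / (ν + (n1:ℝ))) ^ n2 * gW) := mul_pos (mul_pos hGB hR3) hS3
  have hT1 : 0 < ((ν + d1 + q2) / ν) ^ (-(ν + (n1:ℝ) + (n2:ℝ)) / 2) :=
    Real.rpow_pos_of_pos hr1 _
  have hT2 : 0 < ((ν + d1) / ν) ^ (-(ν + (n1:ℝ)) / 2) := Real.rpow_pos_of_pos hr2 _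
  have hT3 : 0 < ((ν + d1 + q2) / (ν + d1)) ^ (-(ν + (n1:ℝ) + (n2:ℝ)) / 2) :=
    Real.rpow_pos_of_pos hr3 _
  rw [Real.log_mul (div_ne_zero hGA.ne' hC1.ne') hT1.ne',
    Real.log_mul (div_ne_zero hGB.ne' hC2.ne') hT2.ne',
    Real.log_mul (div_ne_zero hGA.ne' hC3.ne') hT3.ne',
    Real.log_div hGA.ne' hC1.ne', Real.log_div hGB.ne' hC2.ne', Real.log_div hGA.ne' hC3.ne',
    Real.log_mul (mul_pos hG0 hR1).ne' hS1.ne', Real.log_mul hG0.ne' hR1.ne',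
    Real.log_mul (mul_pos hG0 hR2).ne' hS2.ne', Real.log_mul hG0.ne' hR2.ne',
    Real.log_mul (mul_pos hGB hR3).ne' hS3.ne', Real.log_mul hGB.ne' hR3.ne',
    Real.log_rpow hνπ, Real.log_rpow hνπ, Real.log_rpow hνPπ,
    Real.log_rpow hr1, Real.log_rpow hr2, Real.log_rpow hr3,
    Real.log_sqrt hgg.le, Real.log_sqrt h11.le, Real.log_sqrt hcw.le,
    Real.log_mul h11.ne' hgW.ne', Real.log_mul (pow_pos hcpos n2).ne' hgW.ne', Real.log_pow,
    Real.log_div hN2.ne' hν.ne', Real.log_div hN1.ne' hν.ne', Real.log_div hN2.ne' hN1.ne',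
    Real.log_div hN1.ne' hνP.ne', Real.log_mul hν.ne' hπ.ne', Real.log_mul hνP.ne' hπ.ne']
  ring

end Aux

/-- Conclusion One: the conditional density of the second block given the first, i.e.
the ratio of the joint multivariate t density to the marginal multivariate t density,
is the multivariate t density with location `μ₂ + Σ₂₁Σ₁₁⁻¹(x₁-μ₁)`, scale matrix
`((ν + d₁(x₁))/(ν + p₁)) Σ₂₂|₁`, and degrees of freedom `ν + p₁`; moreover that scale
matrix is symmetric positive definite. -/
theorem mvt_conditional (p1 p2 : ℕ) (hp1 : 1 ≤ p1) (hp2 : 1 ≤ p2)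
    (μ1 : Fin p1 → ℝ) (μ2 : Fin p2 → ℝ)
    (S11 : Matrix (Fin p1) (Fin p1) ℝ) (S12 : Matrix (Fin p1) (Fin p2) ℝ)
    (S21 : Matrix (Fin p2) (Fin p1) ℝ) (S22 : Matrix (Fin p2) (Fin p2) ℝ)
    (hS : (Matrix.fromBlocks S11 S12 S21 S22).PosDef) (ν : ℝ) (hν : 0 < ν)
    (x1 : Fin p1 → ℝ) (x2 : Fin p2 → ℝ) :
    (((ν + (x1 - μ1) ⬝ᵥ S11⁻¹ *ᵥ (x1 - μ1)) / (ν + p1)) •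
        (S22 - S21 * S11⁻¹ * S12)).PosDef ∧
    mvtPdf (Sum.elim μ1 μ2) (Matrix.fromBlocks S11 S12 S21 S22) ν (Sum.elim x1 x2) /
        mvtPdf μ1 S11 ν x1
      = mvtPdf (μ2 + S21 *ᵥ (S11⁻¹ *ᵥ (x1 - μ1)))
          (((ν + (x1 - μ1) ⬝ᵥ S11⁻¹ *ᵥ (x1 - μ1)) / (ν + p1)) • (S22 - S21 * S11⁻¹ * S12))
          (ν + p1) x2 := by
  obtain ⟨h11, hB, hC, h22⟩ := isHermitian_fromBlocks_iff.mp hS.1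
  subst hB
  have hA : S11.PosDef := posDef11 hS
  have hW : (S22 - S12ᴴ * S11⁻¹ * S12).PosDef := posDefSchur hS
  set u : Fin p1 → ℝ := x1 - μ1 with hu
  set v : Fin p2 → ℝ := x2 - μ2 with hv
  have hd1 : 0 ≤ u ⬝ᵥ S11⁻¹ *ᵥ u := by simpa using hA.inv.posSemidef.dotProduct_mulVec_nonneg u
  have hνp1 : (0:ℝ) < ν + p1 := by positivity
  have hc : 0 < (ν + u ⬝ᵥ S11⁻¹ *ᵥ u) / (ν + p1) := div_pos (by linarith) hνp1
  refine ⟨posDef_smul' hW hc, ?_⟩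
  set c : ℝ := (ν + u ⬝ᵥ S11⁻¹ *ᵥ u) / (ν + p1) with hcdef
  set W : Matrix (Fin p2) (Fin p2) ℝ := S22 - S12ᴴ * S11⁻¹ * S12 with hWdef
  set w : Fin p2 → ℝ := v - S12ᴴ *ᵥ (S11⁻¹ *ᵥ u) with hwdef
  have hq2 : 0 ≤ w ⬝ᵥ W⁻¹ *ᵥ w := by simpa using hW.inv.posSemidef.dotProduct_mulVec_nonneg w
  haveI iA : Invertible S11 := hA.isUnit.invertible
  simp only [mvtPdf, Fintype.card_sum, Fintype.card_fin]
  have hsub : Sum.elim x1 x2 - Sum.elim μ1 μ2 = Sum.elim u v := by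
    funext i; cases i <;> simp [hu, hv]
  rw [hsub, quad_decomp S12 hS u v]
  have hdet : (fromBlocks S11 S12 S12ᴴ S22).det = S11.det * W.det := by
    rw [det_fromBlocks₁₁, invOf_eq_nonsing_inv]
  rw [hdet]
  have hmean : x2 - (μ2 + S12ᴴ *ᵥ (S11⁻¹ *ᵥ u)) = w := by
    rw [hwdef, hv, sub_add_eq_sub_sub]
  rw [hmean]
  have hdetc : (c • W).det = c ^ p2 * W.det := by
    rw [det_smul, Fintype.card_fin]
  rw [hdetc]
  have hWdetu : IsUnit W.det := isUnit_iff_ne_zero.mpr hW.det_pos.ne'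
  haveI : Invertible c := invertibleOfNonzero hc.ne'
  have hinvc : (c • W)⁻¹ = c⁻¹ • W⁻¹ := by
    have hone : (c⁻¹ • W⁻¹) * (c • W) = 1 := by
      rw [Matrix.smul_mul, Matrix.mul_smul, smul_smul, inv_mul_cancel₀ hc.ne', one_smul,
        Matrix.nonsing_inv_mul W hWdetu]
    exact Matrix.inv_eq_left_inv hone
  have hq' : w ⬝ᵥ (c • W)⁻¹ *ᵥ w = c⁻¹ * (w ⬝ᵥ W⁻¹ *ᵥ w) := by
    rw [hinvc, smul_mulVec, dotProduct_smul, smul_eq_mul]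
  rw [hq']
  push_cast
  exact scalar_step ν (u ⬝ᵥ S11⁻¹ *ᵥ u) (w ⬝ᵥ W⁻¹ *ᵥ w) S11.det W.det p1 p2 hp1 hp2
    hν hd1 hq2 hA.det_pos hW.det_pos
end
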